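/- Let β : ℝ → ℝ be continuously differentiable, let M > 0, and let v, w ∈ ℝ with |v| ≤ M and |w| ≤ M. Then ∫_{−M}^{M} χ(λ; v) dλ = ∫_{−M}^{M} (1 + β'(λ))·χ(λ; w) dλ + β(0) holds if and only if v = w + β(w). -/

import Mathlib

open MeasureTheory intervalIntegral

/-- The `χ`-function: `χ(λ; v) = 1` if `0 < λ < v`, `= -1` if `v < λ < 0`, `= 0` otherwise. -/
noncomputable def chi (l v : ℝ) : ℝ :=
  if 0 < l ∧ l < v then 1 else if v < l ∧ l < 0 then -1 else 0

lemma chi_key (f : ℝ → ℝ) (hf : Continuous f) {M v : ℝ} (hM : 0 < M) (hv : |v| ≤ M) :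
    (∫ l in (-M)..M, f l * chi l v) = ∫ l in (0:ℝ)..v, f l := by
  rw [abs_le] at hv
  obtain ⟨hv1, hv2⟩ := hv
  rcases le_or_gt 0 v with h | h
  · have heq : ∀ l, f l * chi l v = (Set.Ioo 0 v).indicator f l := by
      intro l
      simp only [chi, Set.indicator_apply, Set.mem_Ioo]
      split_ifs with h1 h2
      · ring
      · linarith [h2.1, h2.2]
      · ring
    rw [intervalIntegral.integral_of_le (by linarith : -M ≤ M)]
    simp_rw [heq]
    rw [MeasureTheory.setIntegral_indicator measurableSet_Ioo]
    have hs : Set.Ioc (-M) M ∩ Set.Ioo 0 v = Set.Ioo 0 v := by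
      apply Set.inter_eq_self_of_subset_right
      intro x hx
      exact ⟨by linarith [hx.1], by linarith [hx.2]⟩
    rw [hs, ← MeasureTheory.integral_Ioc_eq_integral_Ioo,
      ← intervalIntegral.integral_of_le h]
  · have heq : ∀ l, f l * chi l v = -((Set.Ioo v 0).indicator f l) := by
      intro l
      have hne : ¬(0 < l ∧ l < v) := by rintro ⟨a, b⟩; linarith
      simp only [chi, hne, if_false, Set.indicator_apply, Set.mem_Ioo]
      split_ifs <;> ring
    rw [intervalIntegral.integral_of_le (by linarith : -M ≤ M)]
    simp_rw [heq]
    rw [MeasureTheory.integral_neg, MeasureTheory.setIntegral_indicator measurableSet_Ioo]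
    have hs : Set.Ioc (-M) M ∩ Set.Ioo v 0 = Set.Ioo v 0 := by
      apply Set.inter_eq_self_of_subset_right
      intro x hx
      exact ⟨by linarith [hx.1], by linarith [hx.2]⟩
    rw [hs, ← MeasureTheory.integral_Ioc_eq_integral_Ioo,
      ← intervalIntegral.integral_of_le h.le, intervalIntegral.integral_symm, neg_neg]

/-- Formulas (13.3)–(13.6): pointwise equivalence of the kinetic impulsive condition (9.4e)
and the impulsive condition (9.2b): for `|v|, |w| ≤ M`,
`∫_{-M}^M χ(λ; v) dλ = ∫_{-M}^M (1 + β'(λ)) χ(λ; w) dλ + β(0)` iff `v = w + β(w)`. -/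
theorem kinetic_impulsive_condition_iff (β : ℝ → ℝ) (hβ : ContDiff ℝ 1 β)
    (M : ℝ) (hM : 0 < M) (v w : ℝ) (hv : |v| ≤ M) (hw : |w| ≤ M) :
    (∫ l in (-M)..M, chi l v) = (∫ l in (-M)..M, (1 + deriv β l) * chi l w) + β 0 ↔
      v = w + β w := by
  have hderiv : Continuous (deriv β) := hβ.continuous_deriv le_rfl
  have h1 : (∫ l in (-M)..M, chi l v) = v := by
    have := chi_key (fun _ => (1:ℝ)) continuous_const hM hv
    simpa using this
  have h2 : (∫ l in (-M)..M, (1 + deriv β l) * chi l w) = w + β w - β 0 := by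
    rw [chi_key (fun l => 1 + deriv β l) (continuous_const.add hderiv) hM hw,
      intervalIntegral.integral_add intervalIntegrable_const
        (hderiv.intervalIntegrable 0 w),
      intervalIntegral.integral_deriv_eq_sub (fun x _ => hβ.differentiable one_ne_zero x)
        (hderiv.intervalIntegrable 0 w)]
    simp
    ring
  rw [h1, h2]
  constructor <;> intro h <;> linarith
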